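/- The coefficient of z^n in the Taylor expansion at 0 of the rational function 1/((1-z)^{k-n} · (1-2z)), where k ≥ n, equals 1 + C(k,1) + C(k,2) + ... + C(k,n). -/

import Mathlib

lemma pascal_partial (N n : ℕ) :
    ∑ i ∈ Finset.range (n + 1), (N + 1).choose i =
      ∑ i ∈ Finset.range (n + 1), N.choose i + ∑ i ∈ Finset.range n, N.choose i := by
  rw [Finset.sum_range_succ' (fun i => (N + 1).choose i),
      Finset.sum_range_succ' (fun i => N.choose i)]
  simp only [Nat.choose_succ_succ, Finset.sum_add_distrib, Nat.choose_zero_right]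
  ring

lemma sumB (m n : ℕ) :
    ∑ j ∈ Finset.range (n + 1), ∑ i ∈ Finset.range (j + 1), (m + j).choose i =
      ∑ i ∈ Finset.range (n + 1), (m + n + 1).choose i := by
  induction n with
  | zero => simp
  | succ n ih =>
    rw [Finset.sum_range_succ, ih]
    have := pascal_partial (m + n + 1) (n + 1)
    have h2 : m + (n + 1) + 1 = m + n + 1 + 1 := by ring
    rw [h2, this]
    have h3 : m + (n + 1) = m + n + 1 := by ring
    rw [h3, Finset.sum_range_succ (fun i => (m+n+1).choose i) (n+1)]
    ring_nf

lemma key (m n : ℕ) :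
    PowerSeries.coeff (R := ℚ) n
      ((PowerSeries.mk (fun _ : ℕ => (1 : ℚ))) ^ m *
        PowerSeries.mk (fun j : ℕ => (2 : ℚ) ^ j)) =
      ∑ i ∈ Finset.range (n + 1), ((m + n).choose i : ℚ) := by
  induction m generalizing n with
  | zero =>
    simp only [pow_zero, one_mul, PowerSeries.coeff_mk, Nat.zero_add]
    rw [← Nat.cast_sum, Nat.sum_range_choose]
    push_cast
    ring
  | succ m ih =>
    rw [pow_succ', mul_assoc, PowerSeries.coeff_mul]
    rw [Finset.Nat.sum_antidiagonal_eq_sum_range_succ_mk]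
    simp only [PowerSeries.coeff_mk, one_mul]
    have : ∑ j ∈ Finset.range (n + 1),
        (PowerSeries.coeff (R := ℚ) (n - j)) ((PowerSeries.mk fun _ => (1:ℚ)) ^ m *
          PowerSeries.mk fun j : ℕ => (2:ℚ) ^ j) =
        ∑ j ∈ Finset.range (n + 1),
        (PowerSeries.coeff (R := ℚ) j) ((PowerSeries.mk fun _ => (1:ℚ)) ^ m *
          PowerSeries.mk fun j : ℕ => (2:ℚ) ^ j) := by
      rw [← Finset.sum_range_reflect]
      apply Finset.sum_congr rfl
      intro x hx
      simp only [Finset.mem_range] at hx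
      congr 2
      omega
    rw [this]
    simp only [ih]
    rw [show m + 1 + n = m + n + 1 from by ring]
    exact_mod_cast sumB m n

theorem stmt_0 (n k : ℕ) (h : n ≤ k) :
    PowerSeries.coeff (R := ℚ) n
      ((PowerSeries.mk (fun _ : ℕ => (1 : ℚ))) ^ (k - n) *
        PowerSeries.mk (fun j : ℕ => (2 : ℚ) ^ j)) =
      ∑ i ∈ Finset.range (n + 1), (k.choose i : ℚ) := by
  rw [key, Nat.sub_add_cancel h]
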